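/- Let k be an algebraically closed field of characteristic p ≥ 0, let d ≥ 3 and n ≥ 4 be integers with p not dividing d and p not dividing d − 1, and let F = x₁^d + ⋯ + x_n^d ∈ k[x₁,…,x_n]. If A ∈ GL_n(k) and λ ∈ kˣ satisfy F(A·x) = λ·F(x), then A = c·D·P for some c ∈ kˣ, some diagonal matrix D all of whose diagonal entries are d-th roots of unity, and some permutation matrix P. In particular, the stabilizer of the Fermat hypersurface V(F) in PGL_n(k) is generated by the classes of permutation matrices and of diagonal matrices with d-th root of unity entries, and has order d^{n−1}·n!. -/

import Mathlib

open MvPolynomial Matrix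

/-- The polynomial `F(A·x)`, obtained from `F` by substituting
`xᵢ ↦ ∑ⱼ Aᵢⱼ xⱼ`. -/
noncomputable def substMatrixN {k : Type*} [Field k] {n : ℕ}
    (A : Matrix (Fin n) (Fin n) k) (F : MvPolynomial (Fin n) k) :
    MvPolynomial (Fin n) k :=
  aeval (fun i => ∑ j, C (A i j) * X j) F

/-- The subgroup of scalar matrices in `GLₙ(k)`; `PGLₙ(k)` is the quotient
of `GLₙ(k)` by this subgroup. -/
def scalarSubgroupN (k : Type*) [Field k] (n : ℕ) : Subgroup (GL (Fin n) k) :=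
  (Units.map (algebraMap k (Matrix (Fin n) (Fin n) k)).toMonoidHom).range

section Aux

variable {k : Type*} [Field k] {n : ℕ}

lemma substMatrixN_comp (A B : Matrix (Fin n) (Fin n) k) (F : MvPolynomial (Fin n) k) :
    substMatrixN B (substMatrixN A F) = substMatrixN (A * B) F := by
  unfold substMatrixN
  rw [show (aeval (R := k) (fun i => ∑ j, C (B i j) * X j)) ((aeval fun i => ∑ j, C (A i j) * X j) F)
      = ((aeval (R := k) (fun i => ∑ j, C (B i j) * X j)).comp
          (aeval fun i => ∑ j, C (A i j) * X j)) F from rfl,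
    comp_aeval]
  have hfun : (fun i => (aeval (R := k) fun i' => ∑ j, C (B i' j) * X j) (∑ j, C (A i j) * X j))
      = fun i => ∑ j, C ((A * B) i j) * X j := by
    funext i
    simp only [_root_.map_mul, map_sum, aeval_C, aeval_X, algebraMap_eq, Matrix.mul_apply,
      Finset.sum_mul, Finset.mul_sum, mul_assoc]
    exact Finset.sum_comm
  rw [hfun]

lemma substMatrixN_one (F : MvPolynomial (Fin n) k) :
    substMatrixN (1 : Matrix (Fin n) (Fin n) k) F = F := by
  unfold substMatrixN
  have hfun : (fun i => ∑ j, C ((1 : Matrix (Fin n) (Fin n) k) i j) * X j)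
      = (X : Fin n → MvPolynomial (Fin n) k) := by
    funext i
    rw [Finset.sum_eq_single i (fun j _ hj => by simp [Matrix.one_apply, (Ne.symm hj)]) (by simp)]
    simp [Matrix.one_apply]
  rw [hfun, aeval_X_left_apply]

lemma substMatrixN_injective {A : Matrix (Fin n) (Fin n) k} (h : IsUnit A.det) :
    Function.Injective (substMatrixN A) := by
  intro F G hFG
  have := congrArg (substMatrixN A⁻¹) hFG
  rwa [substMatrixN_comp, substMatrixN_comp, Matrix.mul_nonsing_inv _ h,
    substMatrixN_one, substMatrixN_one] at this

/-- The linear form given by row `i` of `A`. -/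
noncomputable def LrowN (A : Matrix (Fin n) (Fin n) k) (i : Fin n) : MvPolynomial (Fin n) k :=
  ∑ t, C (A i t) * X t

lemma pderiv_LrowN (A : Matrix (Fin n) (Fin n) k) (i j : Fin n) :
    pderiv j (LrowN A i) = C (A i j) := by
  unfold LrowN
  rw [map_sum, Finset.sum_eq_single j]
  · simp
  · intro t _ htj; simp [pderiv_C_mul, pderiv_X_of_ne htj]
  · simp

lemma substMatrixN_fermat (A : Matrix (Fin n) (Fin n) k) (d : ℕ) :
    substMatrixN A (∑ i : Fin n, X i ^ d) = ∑ i, (LrowN A i) ^ d := by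
  unfold substMatrixN LrowN
  simp [map_sum, map_pow]

lemma substMatrixN_sum_C_X (A : Matrix (Fin n) (Fin n) k) (e : ℕ) (c : Fin n → k) :
    substMatrixN A (∑ i : Fin n, C (c i) * X i ^ e) = ∑ i, C (c i) * (LrowN A i) ^ e := by
  unfold substMatrixN LrowN
  simp only [map_sum, _root_.map_mul, map_pow, aeval_C, aeval_X, algebraMap_eq]

lemma second_deriv (A : Matrix (Fin n) (Fin n) k) {d : ℕ} (hd : 3 ≤ d) (i j l : Fin n) :
    pderiv l (pderiv j ((LrowN A i) ^ d)) =
      C ((d : k) * ((d - 1 : ℕ) : k) * (A i j * A i l)) * (LrowN A i) ^ (d - 2) := by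
  rw [pderiv_pow, pderiv_LrowN]
  rw [show (d : MvPolynomial (Fin n) k) * (LrowN A i) ^ (d - 1) * C (A i j)
      = C ((d : k) * A i j) * (LrowN A i) ^ (d - 1) by
    rw [← map_natCast (C : k →+* MvPolynomial (Fin n) k) d, C_mul]; ring]
  rw [pderiv_C_mul, pderiv_pow, pderiv_LrowN,
    show d - 1 - 1 = d - 2 by omega,
    ← map_natCast (C : k →+* MvPolynomial (Fin n) k) (d - 1)]
  rw [C_mul, C_mul, C_mul, C_mul]
  ring

lemma rhs_deriv (lam : k) (d : ℕ) {j l : Fin n} (hjl : j ≠ l) :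
    pderiv l (pderiv j (lam • (∑ i : Fin n, X i ^ d : MvPolynomial (Fin n) k))) = 0 := by
  rw [smul_eq_C_mul (∑ i : Fin n, X i ^ d) lam]
  rw [pderiv_C_mul]
  rw [pderiv_C_mul]
  rw [map_sum, map_sum]
  rw [Finset.sum_eq_single j]
  · rw [pderiv_pow, pderiv_X_self, mul_one, pderiv_mul, pderiv_pow,
      pderiv_X_of_ne hjl]
    simp
  · intro t _ htj
    rw [pderiv_pow, pderiv_X_of_ne htj]
    simp
  · simp

lemma rows_orthogonal {d : ℕ} (hd : 3 ≤ d) (hd0 : ((d : ℕ) : k) ≠ 0)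
    (hd1 : (((d - 1) : ℕ) : k) ≠ 0) {A : Matrix (Fin n) (Fin n) k} (hdet : IsUnit A.det)
    {lam : k}
    (hE : substMatrixN A (∑ i : Fin n, X i ^ d)
      = lam • (∑ i : Fin n, X i ^ d : MvPolynomial (Fin n) k))
    {j l : Fin n} (hjl : j ≠ l) (i : Fin n) : A i j * A i l = 0 := by
  have hL : ∑ i' : Fin n, pderiv l (pderiv j ((LrowN A i') ^ d)) = 0 := by
    rw [← map_sum, ← map_sum (pderiv j), ← substMatrixN_fermat, hE, rhs_deriv lam d hjl]
  have h2 : ∑ i' : Fin n, C ((d : k) * ((d - 1 : ℕ) : k) * (A i' j * A i' l))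
      * (LrowN A i') ^ (d - 2) = 0 := by
    rw [← hL]
    exact Finset.sum_congr rfl fun i' _ => (second_deriv A hd i' j l).symm
  have h3 : substMatrixN A (∑ i' : Fin n,
      C ((d : k) * ((d - 1 : ℕ) : k) * (A i' j * A i' l)) * X i' ^ (d - 2))
      = substMatrixN A 0 := by
    rw [substMatrixN_sum_C_X, h2]
    unfold substMatrixN
    rw [map_zero]
  have h4 := substMatrixN_injective hdet h3
  have h5 := congrArg (coeff (Finsupp.single i (d - 2))) h4
  rw [coeff_sum, Finset.sum_eq_single i] at h5
  · rw [coeff_C_mul, X_pow_eq_monomial, coeff_monomial, if_pos rfl, coeff_zero, mul_one] at h5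
    rcases mul_eq_zero.mp h5 with h | h
    · rcases mul_eq_zero.mp h with h' | h'
      · exact absurd h' hd0
      · exact absurd h' hd1
    · exact h
  · intro t _ hti
    rw [coeff_C_mul, X_pow_eq_monomial, coeff_monomial, if_neg, mul_zero]
    intro hcon
    exact hti (Finsupp.single_left_injective (by omega) hcon)
  · intro hcon
    exact absurd (Finset.mem_univ i) hcon

lemma permMatrix_apply' (σ : Equiv.Perm (Fin n)) (i j : Fin n) :
    σ.permMatrix k i j = if σ i = j then 1 else 0 := by
  simp [Equiv.Perm.permMatrix, PEquiv.toMatrix_apply, Equiv.toPEquiv_apply, Option.mem_def,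
    eq_comm]

lemma diag_perm_apply (D : Fin n → k) (σ : Equiv.Perm (Fin n)) (i j : Fin n) :
    (Matrix.diagonal D * σ.permMatrix k) i j = if σ i = j then D i else 0 := by
  rw [Matrix.diagonal_mul, permMatrix_apply']
  split <;> simp

lemma monomial_structure {A : Matrix (Fin n) (Fin n) k} (hdet : IsUnit A.det)
    (horth : ∀ (i j l : Fin n), j ≠ l → A i j * A i l = 0) :
    ∃ (σ : Equiv.Perm (Fin n)) (D : Fin n → k), (∀ i, D i ≠ 0) ∧
      A = Matrix.diagonal D * σ.permMatrix k := by
  have hdet0 : A.det ≠ 0 := hdet.ne_zero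
  have hrow : ∀ i, ∃ j, A i j ≠ 0 := by
    intro i
    by_contra hcon
    push_neg at hcon
    exact hdet0 (Matrix.det_eq_zero_of_row_eq_zero i hcon)
  choose f hf using hrow
  have hzero : ∀ i j, j ≠ f i → A i j = 0 := by
    intro i j hj
    rcases mul_eq_zero.mp (horth i j (f i) hj) with h | h
    · exact h
    · exact absurd h (hf i)
  have hinj : Function.Injective f := by
    by_contra hcon
    have hsurj : ¬ Function.Surjective f := fun hs =>
      hcon (Finite.injective_iff_surjective.mpr hs)
    rw [Function.Surjective] at hsurj
    push_neg at hsurj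
    obtain ⟨j0, hj0⟩ := hsurj
    exact hdet0 (Matrix.det_eq_zero_of_column_eq_zero j0 fun i =>
      hzero i j0 (Ne.symm (hj0 i)))
  refine ⟨Equiv.ofBijective f (Finite.injective_iff_bijective.mp hinj),
    fun i => A i (f i), fun i => hf i, ?_⟩
  ext i j
  rw [diag_perm_apply]
  simp only [Equiv.ofBijective_apply]
  by_cases hj : j = f i
  · subst hj
    rw [if_pos rfl]
  · rw [if_neg (fun h => hj h.symm), hzero i j hj]

lemma LrowN_diag_perm (D : Fin n → k) (σ : Equiv.Perm (Fin n)) (i : Fin n) :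
    LrowN (Matrix.diagonal D * σ.permMatrix k) i = C (D i) * X (σ i) := by
  unfold LrowN
  rw [Finset.sum_eq_single (σ i)]
  · rw [diag_perm_apply, if_pos rfl]
  · intro t _ ht
    rw [diag_perm_apply, if_neg (Ne.symm ht)]
    simp
  · simp

lemma substMatrixN_diag_perm (D : Fin n → k) (σ : Equiv.Perm (Fin n)) (d : ℕ) :
    substMatrixN (Matrix.diagonal D * σ.permMatrix k) (∑ i : Fin n, X i ^ d)
      = ∑ i, C (D i ^ d) * X (σ i) ^ d := by
  rw [substMatrixN_fermat]
  refine Finset.sum_congr rfl fun i _ => ?_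
  rw [LrowN_diag_perm, mul_pow, ← C_pow]

lemma diag_pow_eq_lam {D : Fin n → k} {σ : Equiv.Perm (Fin n)} {d : ℕ} (hd : d ≠ 0) {lam : k}
    (hE : (∑ i, C (D i ^ d) * X (σ i) ^ d : MvPolynomial (Fin n) k)
      = lam • (∑ i : Fin n, X i ^ d : MvPolynomial (Fin n) k)) (i0 : Fin n) :
    D i0 ^ d = lam := by
  have key : ∀ (c : k) (t m : Fin n),
      coeff (Finsupp.single m d) (C c * X t ^ d : MvPolynomial (Fin n) k)
        = if t = m then c else 0 := by
    intro c t m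
    rw [coeff_C_mul, X_pow_eq_monomial, coeff_monomial]
    by_cases h : t = m
    · subst h; rw [if_pos rfl, if_pos rfl, mul_one]
    · rw [if_neg (fun hcon => h (Finsupp.single_left_injective hd hcon)), if_neg h, mul_zero]
  have key2 : ∀ (t m : Fin n),
      coeff (Finsupp.single m d) (X t ^ d : MvPolynomial (Fin n) k)
        = if t = m then 1 else 0 := by
    intro t m
    have := key 1 t m
    rwa [C_1, one_mul] at this
  have h5 := congrArg (coeff (Finsupp.single (σ i0) d)) hE
  rw [coeff_sum, coeff_smul, coeff_sum] at h5
  simp only [key, key2, σ.injective.eq_iff, smul_eq_mul, Finset.mul_sum,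
    mul_ite, mul_one, mul_zero, Finset.sum_ite_eq', Finset.mem_univ, if_pos] at h5
  exact h5

lemma smul_diag_perm (c : k) (D : Fin n → k) (σ : Equiv.Perm (Fin n)) :
    c • (Matrix.diagonal D * σ.permMatrix k)
      = Matrix.diagonal (fun i => c * D i) * σ.permMatrix k := by
  ext i j
  rw [Matrix.smul_apply, diag_perm_apply, diag_perm_apply, smul_eq_mul]
  split <;> simp

/-- Invariance of the Fermat polynomial under monomial matrices. -/
lemma fermat_invariant (c : k) {D : Fin n → k} {d : ℕ} (hD : ∀ i, D i ^ d = 1)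
    (σ : Equiv.Perm (Fin n)) :
    substMatrixN (c • (Matrix.diagonal D * σ.permMatrix k)) (∑ i : Fin n, X i ^ d)
      = (c ^ d) • (∑ i : Fin n, X i ^ d : MvPolynomial (Fin n) k) := by
  rw [smul_diag_perm, substMatrixN_diag_perm, smul_eq_C_mul (∑ i : Fin n, X i ^ d) (c ^ d)]
  have : ∀ i : Fin n, C ((c * D i) ^ d) * (X (σ i) ^ d : MvPolynomial (Fin n) k)
      = C (c ^ d) * X (σ i) ^ d := by
    intro i
    rw [mul_pow, hD i, mul_one]
  rw [Finset.sum_congr rfl fun i _ => this i, ← Finset.mul_sum]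
  congr 1
  exact Equiv.sum_comp σ (fun j => (X j ^ d : MvPolynomial (Fin n) k))

/-- Part 1 of the statement, as a standalone lemma. -/
lemma fermat_part1 [IsAlgClosed k] {d : ℕ} (hd : 3 ≤ d) (hd0 : ((d : ℕ) : k) ≠ 0)
    (hd1 : (((d - 1) : ℕ) : k) ≠ 0) (A : Matrix (Fin n) (Fin n) k) (lam : kˣ)
    (hdet : IsUnit A.det)
    (hE : substMatrixN A (∑ i : Fin n, X i ^ d)
      = (lam : k) • (∑ i : Fin n, X i ^ d : MvPolynomial (Fin n) k)) :
    ∃ (c : kˣ) (D : Fin n → k) (σ : Equiv.Perm (Fin n)),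
      (∀ i, D i ^ d = 1) ∧ A = (c : k) • (Matrix.diagonal D * σ.permMatrix k) := by
  obtain ⟨σ, D', hD'0, hA⟩ := monomial_structure hdet
    (fun i j l hjl => rows_orthogonal hd hd0 hd1 hdet hE hjl i)
  have hlam : ∀ i, D' i ^ d = (lam : k) := by
    intro i
    refine diag_pow_eq_lam (σ := σ) (by omega) ?_ i
    rw [← substMatrixN_diag_perm, ← hA, hE]
  obtain ⟨c, hc⟩ := IsAlgClosed.exists_pow_nat_eq (lam : k) (n := d) (by omega)
  have hc0 : c ≠ 0 := by
    intro h
    rw [h, zero_pow (by omega : d ≠ 0)] at hc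
    exact lam.ne_zero hc.symm
  refine ⟨Units.mk0 c hc0, fun i => c⁻¹ * D' i, σ, ?_, ?_⟩
  · intro i
    rw [mul_pow, hlam i, inv_pow, hc, inv_mul_cancel₀ lam.ne_zero]
  · rw [hA, smul_diag_perm]
    have hfun : (fun i => ((Units.mk0 c hc0 : kˣ) : k) * (c⁻¹ * D' i)) = D' := by
      funext i; rw [Units.val_mk0, ← mul_assoc, mul_inv_cancel₀ hc0, one_mul]
    rw [hfun]

lemma mem_scalar_iff (u : GL (Fin n) k) :
    u ∈ scalarSubgroupN k n ↔ ∃ r : kˣ,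
      (u : Matrix (Fin n) (Fin n) k) = (r : k) • (1 : Matrix (Fin n) (Fin n) k) := by
  constructor
  · rintro ⟨r, rfl⟩
    exact ⟨r, by simp [Algebra.algebraMap_eq_smul_one]⟩
  · rintro ⟨r, hr⟩
    refine ⟨r, ?_⟩
    apply Units.ext
    rw [show (((Units.map (algebraMap k (Matrix (Fin n) (Fin n) k)).toMonoidHom) r :
        GL (Fin n) k) : Matrix (Fin n) (Fin n) k)
      = algebraMap k (Matrix (Fin n) (Fin n) k) (r : k) from rfl,
      Algebra.algebraMap_eq_smul_one]
    exact hr.symm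

lemma mk_eq_mk_iff (a b : GL (Fin n) k) :
    (QuotientGroup.mk a : GL (Fin n) k ⧸ scalarSubgroupN k n) = QuotientGroup.mk b ↔
      ∃ r : kˣ, (b : Matrix (Fin n) (Fin n) k)
        = (r : k) • (a : Matrix (Fin n) (Fin n) k) := by
  rw [QuotientGroup.eq]
  rw [mem_scalar_iff]
  constructor
  · rintro ⟨r, hr⟩
    refine ⟨r, ?_⟩
    have := congrArg (fun M => (a : Matrix (Fin n) (Fin n) k) * M) hr
    rw [← Units.val_mul, mul_inv_cancel_left] at this
    rw [this, mul_smul_comm, mul_one]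
  · rintro ⟨r, hr⟩
    refine ⟨r, ?_⟩
    rw [Units.val_mul, hr, mul_smul_comm, ← Units.val_mul, inv_mul_cancel, Units.val_one]

lemma isUnit_diag_perm {D : Fin n → k} (hD : ∀ i, D i ≠ 0) (σ : Equiv.Perm (Fin n)) :
    IsUnit (Matrix.diagonal D * σ.permMatrix k) := by
  rw [Matrix.isUnit_iff_isUnit_det, Matrix.det_mul, Matrix.det_diagonal,
    Matrix.det_permutation]
  refine (Ne.isUnit ?_)
  apply mul_ne_zero
  · exact Finset.prod_ne_zero_iff.mpr fun i _ => hD i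
  · rcases Int.units_eq_one_or (Equiv.Perm.sign σ) with h | h <;> rw [h] <;> simp

end Aux

/-- Let `p = char k` and `d ≥ 3`, `n ≥ 4` with `p ∤ d` and
`p ∤ d − 1`, and let `F = x₁^d + ⋯ + xₙ^d`.  Every `A ∈ GLₙ(k)` with
`F(A·x) = λ·F(x)` factors as `c·D·P` with `c` a scalar, `D` diagonal with
`d`-th root of unity entries, and `P` a permutation matrix; consequently the
stabilizer of the Fermat hypersurface `V(F)` in `PGLₙ(k)` is finite of order
`d^(n−1)·n!`. -/
theorem stmt12 {k : Type*} [Field k] [IsAlgClosed k]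
    (p : ℕ) (hchar : ringChar k = p)
    (d n : ℕ) (hd : 3 ≤ d) (hn : 4 ≤ n) (hpd : ¬ p ∣ d) (hpd1 : ¬ p ∣ (d - 1)) :
    (∀ (A : Matrix (Fin n) (Fin n) k) (lam : kˣ), IsUnit A.det →
      substMatrixN A (∑ i : Fin n, X i ^ d) =
        (lam : k) • (∑ i : Fin n, X i ^ d : MvPolynomial (Fin n) k) →
      ∃ (c : kˣ) (D : Fin n → k) (σ : Equiv.Perm (Fin n)),
        (∀ i, D i ^ d = 1) ∧
        A = (c : k) • (Matrix.diagonal D * σ.permMatrix k)) ∧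
    ((QuotientGroup.mk :
        GL (Fin n) k → GL (Fin n) k ⧸ scalarSubgroupN k n) ''
        {A : GL (Fin n) k | ∃ lam : kˣ,
          substMatrixN (A : Matrix (Fin n) (Fin n) k) (∑ i : Fin n, X i ^ d) =
            (lam : k) • (∑ i : Fin n, X i ^ d : MvPolynomial (Fin n) k)}).Finite ∧
    ((QuotientGroup.mk :
        GL (Fin n) k → GL (Fin n) k ⧸ scalarSubgroupN k n) ''
        {A : GL (Fin n) k | ∃ lam : kˣ,
          substMatrixN (A : Matrix (Fin n) (Fin n) k) (∑ i : Fin n, X i ^ d) =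
            (lam : k) • (∑ i : Fin n, X i ^ d : MvPolynomial (Fin n) k)}).ncard
      = d ^ (n - 1) * Nat.factorial n := by
  subst hchar
  haveI : CharP k (ringChar k) := ringChar.charP k
  have hd0 : ((d : ℕ) : k) ≠ 0 := fun h => hpd ((CharP.cast_eq_zero_iff k (ringChar k) d).mp h)
  have hd1 : (((d - 1) : ℕ) : k) ≠ 0 :=
    fun h => hpd1 ((CharP.cast_eq_zero_iff k (ringChar k) (d - 1)).mp h)
  have hdne : d ≠ 0 := by omega
  obtain ⟨m, rfl⟩ : ∃ m, n = m + 1 := ⟨n - 1, by omega⟩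
  have part1 : ∀ (A : Matrix (Fin (m + 1)) (Fin (m + 1)) k) (lam : kˣ), IsUnit A.det →
      substMatrixN A (∑ i : Fin (m + 1), X i ^ d) =
        (lam : k) • (∑ i : Fin (m + 1), X i ^ d : MvPolynomial (Fin (m + 1)) k) →
      ∃ (c : kˣ) (D : Fin (m + 1) → k) (σ : Equiv.Perm (Fin (m + 1))),
        (∀ i, D i ^ d = 1) ∧
        A = (c : k) • (Matrix.diagonal D * σ.permMatrix k) :=
    fun A lam hdet hE => fermat_part1 hd hd0 hd1 A lam hdet hE
  -- the roots of unity
  haveI : NeZero ((d : ℕ) : k) := ⟨hd0⟩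
  obtain ⟨ζ, hζ⟩ := HasEnoughRootsOfUnity.exists_primitiveRoot k d
  have hcard : (Polynomial.nthRootsFinset d (1 : k)).card = d := hζ.card_nthRootsFinset
  have hmem : ∀ x : k, x ∈ Polynomial.nthRootsFinset d (1 : k) ↔ x ^ d = 1 :=
    fun x => Polynomial.mem_nthRootsFinset (by omega) 1
  -- the normalized monomial matrices
  set μ := Polynomial.nthRootsFinset d (1 : k) with hμdef
  let Dof : (Fin m → μ) → (Fin (m + 1) → k) := fun e => Fin.cons 1 (fun j => (e j : k))
  have hD1 : ∀ e i, Dof e i ^ d = 1 := by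
    intro e i
    refine Fin.cases ?_ ?_ i
    · simp [Dof]
    · intro j
      simp only [Dof, Fin.cons_succ]
      exact (hmem _).mp (e j).2
  have hD0 : ∀ e i, Dof e i ≠ 0 := by
    intro e i h
    have := hD1 e i
    rw [h, zero_pow hdne] at this
    exact zero_ne_one this
  have hU : ∀ x : (Fin m → μ) × Equiv.Perm (Fin (m + 1)),
      IsUnit (Matrix.diagonal (Dof x.1) * x.2.permMatrix k) :=
    fun x => isUnit_diag_perm (hD0 x.1) x.2
  let g : ((Fin m → μ) × Equiv.Perm (Fin (m + 1))) →
      GL (Fin (m + 1)) k ⧸ scalarSubgroupN k (m + 1) :=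
    fun x => QuotientGroup.mk (hU x).unit
  -- the image set equals the range of `g`
  have hset : (QuotientGroup.mk :
        GL (Fin (m + 1)) k → GL (Fin (m + 1)) k ⧸ scalarSubgroupN k (m + 1)) ''
        {A : GL (Fin (m + 1)) k | ∃ lam : kˣ,
          substMatrixN (A : Matrix (Fin (m + 1)) (Fin (m + 1)) k) (∑ i : Fin (m + 1), X i ^ d) =
            (lam : k) • (∑ i : Fin (m + 1), X i ^ d : MvPolynomial (Fin (m + 1)) k)}
      = Set.range g := by
    apply Set.Subset.antisymm
    · rintro q ⟨A, ⟨lam, hE⟩, rfl⟩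
      have hdet : IsUnit (A : Matrix (Fin (m + 1)) (Fin (m + 1)) k).det :=
        (Matrix.isUnit_iff_isUnit_det _).mp A.isUnit
      obtain ⟨c, D, σ, hDd, hA⟩ := part1 (A : Matrix (Fin (m + 1)) (Fin (m + 1)) k) lam hdet hE
      have hDne : ∀ i, D i ≠ 0 := by
        intro i h
        have := hDd i
        rw [h, zero_pow hdne] at this
        exact zero_ne_one this
      let e : Fin m → μ := fun j => ⟨(D 0)⁻¹ * D j.succ, (hmem _).mpr (by
        rw [mul_pow, inv_pow, hDd, hDd, inv_one, one_mul])⟩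
      refine ⟨(e, σ), ?_⟩
      show QuotientGroup.mk _ = QuotientGroup.mk A
      rw [mk_eq_mk_iff]
      refine ⟨c * Units.mk0 (D 0) (hDne 0), ?_⟩
      rw [IsUnit.unit_spec]
      have hDof : Dof e = fun i => (D 0)⁻¹ * D i := by
        funext i
        refine Fin.cases ?_ ?_ i
        · simp only [Dof, Fin.cons_zero]
          rw [inv_mul_cancel₀ (hDne 0)]
        · intro j
          simp only [Dof, Fin.cons_succ, e]
      rw [hDof, ← smul_diag_perm, hA, smul_smul]
      congr 1
      rw [Units.val_mul, Units.val_mk0, mul_assoc, mul_inv_cancel₀ (hDne 0), mul_one]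
    · rintro q ⟨⟨e, σ⟩, rfl⟩
      refine ⟨(hU (e, σ)).unit, ⟨1, ?_⟩, rfl⟩
      rw [IsUnit.unit_spec]
      have h6 := fermat_invariant (1 : k) (hD1 e) σ
      rw [one_smul, one_pow] at h6
      rw [Units.val_one, one_smul, h6, one_smul]
  -- injectivity of `g`
  have hginj : Function.Injective g := by
    rintro ⟨e1, σ1⟩ ⟨e2, σ2⟩ h
    obtain ⟨r, hr⟩ := (mk_eq_mk_iff _ _).mp h
    rw [IsUnit.unit_spec, IsUnit.unit_spec] at hr
    have hσ : σ1 = σ2 := by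
      apply Equiv.ext
      intro i
      by_contra hne
      have h1 := congrFun (congrFun hr i) (σ2 i)
      rw [diag_perm_apply, if_pos rfl, Matrix.smul_apply, diag_perm_apply, if_neg hne,
        smul_zero] at h1
      exact hD0 e2 i h1
    subst hσ
    have hDeq : ∀ i, Dof e2 i = (r : k) * Dof e1 i := by
      intro i
      have h1 := congrFun (congrFun hr i) (σ1 i)
      rwa [diag_perm_apply, if_pos rfl, Matrix.smul_apply, diag_perm_apply, if_pos rfl,
        smul_eq_mul] at h1
    have hr1 : (r : k) = 1 := by
      have := hDeq 0
      simp only [Dof, Fin.cons_zero, mul_one] at this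
      exact this.symm
    have he : e1 = e2 := by
      funext j
      apply Subtype.ext
      have := hDeq j.succ
      rw [hr1, one_mul] at this
      simpa only [Dof, Fin.cons_succ] using this.symm
    rw [he]
  constructor
  · exact part1
  constructor
  · rw [hset]
    exact Set.finite_range g
  · rw [hset, ← Set.image_univ, Set.ncard_image_of_injective _ hginj, Set.ncard_univ,
      Nat.card_prod, Nat.card_fun]
    have hμcard : Nat.card μ = d := by
      rw [Nat.card_eq_fintype_card, Fintype.card_coe, hcard]
    rw [hμcard, Nat.card_eq_fintype_card (α := Fin m), Fintype.card_fin,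
      Nat.card_eq_fintype_card (α := Equiv.Perm (Fin (m + 1))), Fintype.card_perm,
      Fintype.card_fin]
    norm_num
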